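/- Assume |⟦γ⟧| < σ and let χ : [−ℓ,ℓ] → ℝ be the unique twice continuously differentiable solution of the equilibrium capillary problem with pressure P = 0. Set M_min = ∫_{−ℓ}^{ℓ} ( χ(x) − min_{[−ℓ,ℓ]} χ ) dx ≥ 0. Then for each M_top > M_min there exists a unique pair (ζ₀, P₀), with ζ₀ : [−ℓ,ℓ] → ℝ twice continuously differentiable and P₀ ∈ ℝ, solving the equilibrium capillary problem with pressure P₀ and satisfying ∫_{−ℓ}^{ℓ} ζ₀(x) dx = M_top. Moreover this ζ₀ is infinitely differentiable, even, strictly positive on [−ℓ,ℓ], and P₀ = (g·M_top − 2⟦γ⟧)/(2ℓ). -/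

import Mathlib

open Set MeasureTheory Topology Filter

/-- One-sided derivative of a function regarded as a function on `[-ℓ, ℓ]`. -/
noncomputable def capD (ℓ : ℝ) (ζ : ℝ → ℝ) : ℝ → ℝ :=
  derivWithin ζ (Set.Icc (-ℓ) ℓ)

/-- The mean curvature operator `𝓗(ζ) = (ζ'/√(1+(ζ')²))'` on `[-ℓ, ℓ]`. -/
noncomputable def meanCurv (ℓ : ℝ) (ζ : ℝ → ℝ) : ℝ → ℝ :=
  derivWithin (fun x => capD ℓ ζ x / Real.sqrt (1 + (capD ℓ ζ x) ^ 2)) (Set.Icc (-ℓ) ℓ)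

/-- `ζ` is a twice continuously differentiable solution of the equilibrium capillary
problem on `[-ℓ, ℓ]` with pressure `P`. -/
def IsCapSol (g σ ℓ γ P : ℝ) (ζ : ℝ → ℝ) : Prop :=
  ContDiffOn ℝ 2 ζ (Set.Icc (-ℓ) ℓ) ∧
  (∀ x ∈ Set.Ioo (-ℓ) ℓ, g * ζ x - σ * meanCurv ℓ ζ x = P) ∧
  σ * capD ℓ ζ ℓ / Real.sqrt (1 + (capD ℓ ζ ℓ) ^ 2) = γ ∧
  σ * capD ℓ ζ (-ℓ) / Real.sqrt (1 + (capD ℓ ζ (-ℓ)) ^ 2) = -γ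

/-- The capillary energy functional `𝓘`, expressed in terms of a function `ζ`
and its derivative `ζ'`. -/
noncomputable def capEnergy (g σ ℓ γ : ℝ) (ζ ζ' : ℝ → ℝ) : ℝ :=
  (∫ x in (-ℓ)..ℓ, (g / 2 * ζ x ^ 2 + σ * Real.sqrt (1 + ζ' x ^ 2))) -
    γ * (ζ ℓ + ζ (-ℓ))

/-- `ψ ∈ W^{1,1}((-ℓ,ℓ))` with weak derivative `ψ'`. -/
def IsW11 (ℓ : ℝ) (ψ ψ' : ℝ → ℝ) : Prop :=
  MeasureTheory.IntegrableOn ψ' (Set.Ioo (-ℓ) ℓ) ∧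
  ∀ x ∈ Set.Icc (-ℓ) ℓ, ψ x = ψ (-ℓ) + ∫ t in (-ℓ)..x, ψ' t


noncomputable def capF (t : ℝ) : ℝ := t / Real.sqrt (1 + t ^ 2)
noncomputable def capG (y : ℝ) : ℝ := y / Real.sqrt (1 - y ^ 2)

lemma one_add_sq_pos (t : ℝ) : (0:ℝ) < 1 + t ^ 2 := by positivity

lemma sqrt_one_add_sq_pos (t : ℝ) : 0 < Real.sqrt (1 + t ^ 2) :=
  Real.sqrt_pos.2 (one_add_sq_pos t)

lemma capF_sq (t : ℝ) : capF t ^ 2 = t ^ 2 / (1 + t ^ 2) := by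
  rw [capF, div_pow, Real.sq_sqrt (one_add_sq_pos t).le]

lemma capF_sq_lt_one (t : ℝ) : capF t ^ 2 < 1 := by
  rw [capF_sq]
  rw [div_lt_one (one_add_sq_pos t)]
  linarith

lemma capG_capF (t : ℝ) : capG (capF t) = t := by
  have h1 : 1 - capF t ^ 2 = 1 / (1 + t ^ 2) := by
    rw [capF_sq]; field_simp; ring
  rw [capG, h1, one_div, Real.sqrt_inv, capF]
  field_simp

noncomputable def capF' (t : ℝ) : ℝ := 1 / (Real.sqrt (1 + t ^ 2) * (1 + t ^ 2))

lemma hasDerivAt_capF (t : ℝ) : HasDerivAt capF (capF' t) t := by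
  have hs : HasDerivAt (fun t : ℝ => Real.sqrt (1 + t ^ 2)) (t / Real.sqrt (1 + t ^ 2)) t := by
    have h1 : HasDerivAt (fun t : ℝ => 1 + t ^ 2) (2 * t) t := by
      simpa using ((hasDerivAt_pow 2 t).const_add 1)
    have := (Real.hasDerivAt_sqrt (one_add_sq_pos t).ne').comp t h1
    refine this.congr_deriv ?_
    field_simp
  have := (hasDerivAt_id t).div hs (sqrt_one_add_sq_pos t).ne'
  refine this.congr_deriv ?_
  rw [capF']
  rw [Real.sq_sqrt (one_add_sq_pos t).le]
  field_simp
  rw [id, Real.sq_sqrt (one_add_sq_pos t).le]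
  ring

lemma capF'_pos (t : ℝ) : 0 < capF' t := by
  rw [capF']; positivity

lemma strictMono_capF : StrictMono capF := by
  exact strictMono_of_deriv_pos (fun t => by
    rw [(hasDerivAt_capF t).deriv]; exact capF'_pos t)

lemma capF_mul_nonneg (a b : ℝ) : 0 ≤ (capF a - capF b) * (a - b) := by
  rcases le_total a b with h | h
  · have := strictMono_capF.monotone h
    nlinarith
  · have := strictMono_capF.monotone h
    nlinarith

lemma contDiff_capF {n : WithTop ℕ∞} : ContDiff ℝ n capF := by
  apply ContDiff.div contDiff_id
  · apply ContDiff.sqrt ?_ (fun t => (one_add_sq_pos t).ne')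
    exact contDiff_const.add (contDiff_id.pow 2)
  · exact fun t => (sqrt_one_add_sq_pos t).ne'

lemma contDiffOn_capG {n : WithTop ℕ∞} : ContDiffOn ℝ n capG (Ioo (-1 : ℝ) 1) := by
  apply ContDiffOn.div contDiffOn_id
  · apply ContDiffOn.sqrt (contDiffOn_const.sub (contDiffOn_id.pow 2))
    intro y hy
    have h1 : y ^ 2 < 1 := by
      rw [sq_lt_one_iff_abs_lt_one, abs_lt]; exact ⟨hy.1, hy.2⟩
    simp only [id]
    nlinarith
  · intro y hy
    have h1 : y ^ 2 < 1 := by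
      rw [sq_lt_one_iff_abs_lt_one, abs_lt]; exact ⟨hy.1, hy.2⟩
    have : (0:ℝ) < 1 - y ^ 2 := by linarith
    exact (Real.sqrt_pos.2 this).ne'

lemma capF_mem_Ioo (t : ℝ) : capF t ∈ Ioo (-1 : ℝ) 1 := by
  have := capF_sq_lt_one t
  constructor <;> nlinarith

open Filter in
lemma eqOn_Icc_of_eqOn_Ioo {f₁ f₂ : ℝ → ℝ} {a b : ℝ} (hab : a < b)
    (h₁ : ContinuousOn f₁ (Icc a b)) (h₂ : ContinuousOn f₂ (Icc a b))
    (h : EqOn f₁ f₂ (Ioo a b)) : EqOn f₁ f₂ (Icc a b) := by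
  intro x hx
  have hne : (𝓝[Ioo a b] x).NeBot := by
    rw [← mem_closure_iff_nhdsWithin_neBot, closure_Ioo hab.ne]
    exact hx
  have t1 : Tendsto f₁ (𝓝[Ioo a b] x) (𝓝 (f₁ x)) :=
    (h₁ x hx).mono Ioo_subset_Icc_self
  have t2 : Tendsto f₁ (𝓝[Ioo a b] x) (𝓝 (f₂ x)) := by
    refine Tendsto.congr' ?_ ((h₂ x hx).mono Ioo_subset_Icc_self)
    filter_upwards [self_mem_nhdsWithin] with y hy using (h hy).symm
  exact tendsto_nhds_unique t1 t2

lemma eqOn_zero_of_ae_zero {f : ℝ → ℝ} {a b : ℝ} (hab : a < b)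
    (hc : ContinuousOn f (Icc a b)) (h : f =ᵐ[volume.restrict (Ioc a b)] 0) :
    ∀ x ∈ Icc a b, f x = 0 := by
  have hIoo : ∀ x ∈ Ioo a b, f x = 0 := by
    intro x hx
    by_contra hne
    have hca : ContinuousAt f x := hc.continuousAt (Icc_mem_nhds hx.1 hx.2)
    have hev : ∀ᶠ y in 𝓝 x, f y ≠ 0 := hca.eventually_ne hne
    obtain ⟨ε, hε, hball⟩ := Metric.eventually_nhds_iff.1 hev
    set c := max a (x - ε) with hc'
    set d := min b (x + ε) with hd'
    have hxc : c < x := max_lt hx.1 (by linarith)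
    have hxd : x < d := lt_min hx.2 (by linarith)
    have hsub : Ioo c d ⊆ {y | ¬ f y = 0} := by
      intro y hy
      apply hball
      rw [Real.dist_eq, abs_lt]
      constructor
      · have : x - ε ≤ c := le_max_right _ _
        have := hy.1; linarith
      · have : d ≤ x + ε := min_le_right _ _
        have := hy.2; linarith
    have h0 : volume.restrict (Ioc a b) {y | ¬ f y = 0} = 0 := by
      have := ae_iff.1 h
      simpa using this
    have hsub2 : Ioo c d ⊆ Ioc a b := fun y hy =>
      ⟨lt_of_le_of_lt (le_max_left _ _) hy.1, hy.2.le.trans (min_le_left _ _)⟩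
    have hm : volume.restrict (Ioc a b) (Ioo c d) = 0 :=
      le_antisymm (h0 ▸ measure_mono hsub) bot_le
    rw [Measure.restrict_apply measurableSet_Ioo,
      inter_eq_self_of_subset_left hsub2, Real.volume_Ioo] at hm
    have : (0:ℝ) < d - c := by linarith
    simp [ENNReal.ofReal_eq_zero] at hm
    linarith
  exact fun x hx => eqOn_Icc_of_eqOn_Ioo hab hc continuousOn_const (fun y hy => hIoo y hy) hx

section SolFacts
variable {g σ ℓ γ P : ℝ} {ζ : ℝ → ℝ}

lemma capD_contDiffOn (hℓ : 0 < ℓ) {n : ℕ} (h : ContDiffOn ℝ (n + 1) ζ (Icc (-ℓ) ℓ)) :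
    ContDiffOn ℝ n (capD ℓ ζ) (Icc (-ℓ) ℓ) := by
  have hu : UniqueDiffOn ℝ (Icc (-ℓ) ℓ) := uniqueDiffOn_Icc (by linarith)
  have := (contDiffOn_succ_iff_derivWithin (n := n) hu).1 (by exact_mod_cast h)
  exact this.2.2

lemma contDiffOn_of_derivWithin (hℓ : 0 < ℓ) {n : ℕ} {f : ℝ → ℝ}
    (hd : DifferentiableOn ℝ f (Icc (-ℓ) ℓ))
    (h : ContDiffOn ℝ n (derivWithin f (Icc (-ℓ) ℓ)) (Icc (-ℓ) ℓ)) :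
    ContDiffOn ℝ (n + 1) f (Icc (-ℓ) ℓ) := by
  have hu : UniqueDiffOn ℝ (Icc (-ℓ) ℓ) := uniqueDiffOn_Icc (by linarith)
  exact_mod_cast (contDiffOn_succ_iff_derivWithin (n := n) hu).2
    ⟨hd, by simp, h⟩
end SolFacts

section SolFacts2
variable {g σ ℓ γ P : ℝ} {ζ : ℝ → ℝ}

lemma meanCurv_eq (ℓ : ℝ) (ζ : ℝ → ℝ) :
    meanCurv ℓ ζ = derivWithin (fun x => capF (capD ℓ ζ x)) (Icc (-ℓ) ℓ) := rfl

lemma IsCapSol.capD_cd (hℓ : 0 < ℓ) (h : IsCapSol g σ ℓ γ P ζ) :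
    ContDiffOn ℝ 1 (capD ℓ ζ) (Icc (-ℓ) ℓ) :=
  capD_contDiffOn hℓ (n := 1) (by exact_mod_cast h.1)

lemma IsCapSol.v_cd (hℓ : 0 < ℓ) (h : IsCapSol g σ ℓ γ P ζ) :
    ContDiffOn ℝ 1 (fun x => capF (capD ℓ ζ x)) (Icc (-ℓ) ℓ) :=
  contDiff_capF.comp_contDiffOn (h.capD_cd hℓ)

lemma IsCapSol.hasDerivAt_capD (hℓ : 0 < ℓ) (h : IsCapSol g σ ℓ γ P ζ) :
    ∀ x ∈ Ioo (-ℓ) ℓ, HasDerivAt ζ (capD ℓ ζ x) x := by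
  intro x hx
  have hd : DifferentiableOn ℝ ζ (Icc (-ℓ) ℓ) := h.1.differentiableOn (by norm_num)
  exact ((hd x (Ioo_subset_Icc_self hx)).hasDerivWithinAt).hasDerivAt
    (Icc_mem_nhds hx.1 hx.2)

lemma IsCapSol.hasDerivAt_v (hσ : 0 < σ) (hℓ : 0 < ℓ) (h : IsCapSol g σ ℓ γ P ζ) :
    ∀ x ∈ Ioo (-ℓ) ℓ,
      HasDerivAt (fun x => capF (capD ℓ ζ x)) ((g * ζ x - P) / σ) x := by
  intro x hx
  have hd : DifferentiableOn ℝ (fun x => capF (capD ℓ ζ x)) (Icc (-ℓ) ℓ) :=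
    (h.v_cd hℓ).differentiableOn (by norm_num)
  have ha : HasDerivAt (fun x => capF (capD ℓ ζ x))
      (derivWithin (fun x => capF (capD ℓ ζ x)) (Icc (-ℓ) ℓ) x) x :=
    ((hd x (Ioo_subset_Icc_self hx)).hasDerivWithinAt).hasDerivAt (Icc_mem_nhds hx.1 hx.2)
  have heq := h.2.1 x hx
  rw [meanCurv_eq] at heq
  have : derivWithin (fun x => capF (capD ℓ ζ x)) (Icc (-ℓ) ℓ) x = (g * ζ x - P) / σ := by
    field_simp
    linarith
  rwa [this] at ha

lemma IsCapSol.mass_identity (hσ : 0 < σ) (hℓ : 0 < ℓ) (h : IsCapSol g σ ℓ γ P ζ) :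
    g * (∫ x in (-ℓ)..ℓ, ζ x) - 2 * ℓ * P = 2 * γ := by
  have hll : -ℓ ≤ ℓ := by linarith
  have hcζ : ContinuousOn ζ (Icc (-ℓ) ℓ) := h.1.continuousOn
  have key : (∫ x in (-ℓ)..ℓ, (g * ζ x - P)) =
      σ * capF (capD ℓ ζ ℓ) - σ * capF (capD ℓ ζ (-ℓ)) := by
    apply intervalIntegral.integral_eq_sub_of_hasDeriv_right_of_le
      (f := fun x => σ * capF (capD ℓ ζ x)) hll
    · exact (continuousOn_const.mul (((contDiff_capF (n := 1)).continuous).comp_continuousOn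
        (h.capD_cd hℓ).continuousOn))
    · intro x hx
      have := ((h.hasDerivAt_v hσ hℓ x hx).const_mul σ)
      have h2 : σ * ((g * ζ x - P) / σ) = g * ζ x - P := by field_simp
      rw [h2] at this
      exact this.hasDerivWithinAt
    · apply ContinuousOn.intervalIntegrable
      rw [uIcc_of_le hll]
      exact (continuousOn_const.mul hcζ).sub continuousOn_const
  have hbc1 : σ * capF (capD ℓ ζ ℓ) = γ := by
    rw [capF, ← mul_div_assoc]; exact h.2.2.1
  have hbc2 : σ * capF (capD ℓ ζ (-ℓ)) = -γ := by
    rw [capF, ← mul_div_assoc]; exact h.2.2.2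
  rw [hbc1, hbc2] at key
  have hint : (∫ x in (-ℓ)..ℓ, (g * ζ x - P)) =
      g * (∫ x in (-ℓ)..ℓ, ζ x) - P * (ℓ - (-ℓ)) := by
    rw [intervalIntegral.integral_sub, intervalIntegral.integral_const_mul,
      intervalIntegral.integral_const]
    · simp; ring
    · apply ContinuousOn.intervalIntegrable
      rw [uIcc_of_le hll]
      exact continuousOn_const.mul hcζ
    · exact intervalIntegrable_const
  rw [hint] at key
  linarith

end SolFacts2

section Unique
variable {g σ ℓ γ : ℝ}

lemma IsCapSol.pressure_eq (hσ : 0 < σ) (hℓ : 0 < ℓ) {ζ : ℝ → ℝ} {P M : ℝ}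
    (h : IsCapSol g σ ℓ γ P ζ) (hM : (∫ x in (-ℓ)..ℓ, ζ x) = M) :
    P = (g * M - 2 * γ) / (2 * ℓ) := by
  have := h.mass_identity hσ hℓ
  rw [hM] at this
  field_simp
  linarith

lemma IsCapSol.unique (hg : 0 < g) (hσ : 0 < σ) (hℓ : 0 < ℓ)
    {ζ₁ ζ₂ : ℝ → ℝ} {P₁ P₂ : ℝ}
    (h₁ : IsCapSol g σ ℓ γ P₁ ζ₁) (h₂ : IsCapSol g σ ℓ γ P₂ ζ₂)
    (hmass : (∫ x in (-ℓ)..ℓ, ζ₁ x) = ∫ x in (-ℓ)..ℓ, ζ₂ x) :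
    EqOn ζ₁ ζ₂ (Icc (-ℓ) ℓ) ∧ P₁ = P₂ := by
  have hll : -ℓ ≤ ℓ := by linarith
  have hlt : -ℓ < ℓ := by linarith
  have hP : P₁ = P₂ := by
    rw [h₁.pressure_eq hσ hℓ hmass, h₂.pressure_eq hσ hℓ rfl]
  subst hP
  set q : ℝ → ℝ := fun x => σ * (capF (capD ℓ ζ₁ x) - capF (capD ℓ ζ₂ x)) with hq
  set w : ℝ → ℝ := fun x => ζ₁ x - ζ₂ x with hw
  set D : ℝ → ℝ :=
    fun x => g * w x * w x + q x * (capD ℓ ζ₁ x - capD ℓ ζ₂ x) with hD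
  have hqℓ : q ℓ = 0 := by
    have b1 : σ * capF (capD ℓ ζ₁ ℓ) = γ := by
      rw [capF, ← mul_div_assoc]; exact h₁.2.2.1
    have b2 : σ * capF (capD ℓ ζ₂ ℓ) = γ := by
      rw [capF, ← mul_div_assoc]; exact h₂.2.2.1
    simp only [hq, mul_sub, b1, b2, sub_self]
  have hqnℓ : q (-ℓ) = 0 := by
    have b1 : σ * capF (capD ℓ ζ₁ (-ℓ)) = -γ := by
      rw [capF, ← mul_div_assoc]; exact h₁.2.2.2
    have b2 : σ * capF (capD ℓ ζ₂ (-ℓ)) = -γ := by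
      rw [capF, ← mul_div_assoc]; exact h₂.2.2.2
    simp only [hq, mul_sub, b1, b2, sub_self]
  have hqc : ContinuousOn q (Icc (-ℓ) ℓ) :=
    continuousOn_const.mul (((contDiff_capF (n := 1)).continuous.comp_continuousOn
      (h₁.capD_cd hℓ).continuousOn).sub ((contDiff_capF (n := 1)).continuous.comp_continuousOn
      (h₂.capD_cd hℓ).continuousOn))
  have hwc : ContinuousOn w (Icc (-ℓ) ℓ) := h₁.1.continuousOn.sub h₂.1.continuousOn
  have hDc : ContinuousOn D (Icc (-ℓ) ℓ) :=
    ((continuousOn_const.mul hwc).mul hwc).add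
      (hqc.mul ((h₁.capD_cd hℓ).continuousOn.sub (h₂.capD_cd hℓ).continuousOn))
  have hDint : IntervalIntegrable D volume (-ℓ) ℓ := by
    apply ContinuousOn.intervalIntegrable; rwa [uIcc_of_le hll]
  have key : (∫ x in (-ℓ)..ℓ, D x) = q ℓ * w ℓ - q (-ℓ) * w (-ℓ) := by
    apply intervalIntegral.integral_eq_sub_of_hasDeriv_right_of_le
      (f := fun x => q x * w x) hll (hqc.mul hwc) ?_ hDint
    intro x hx
    have hq' : HasDerivAt q (g * w x) x := by
      have := ((h₁.hasDerivAt_v hσ hℓ x hx).sub (h₂.hasDerivAt_v hσ hℓ x hx)).const_mul σ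
      have e : σ * ((g * ζ₁ x - P₁) / σ - (g * ζ₂ x - P₁) / σ) = g * w x := by
        field_simp; ring
      rwa [e] at this
    have hw' : HasDerivAt w (capD ℓ ζ₁ x - capD ℓ ζ₂ x) x :=
      (h₁.hasDerivAt_capD hℓ x hx).sub (h₂.hasDerivAt_capD hℓ x hx)
    exact ((hq'.mul hw').congr_deriv (by ring)).hasDerivWithinAt
  rw [hqℓ, hqnℓ] at key
  simp only [zero_mul, sub_zero, sub_self] at key
  have hDnn : ∀ x ∈ Icc (-ℓ) ℓ, 0 ≤ D x := by
    intro x hx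
    have h1 : 0 ≤ g * w x * w x := by nlinarith [mul_self_nonneg (w x)]
    have h2 : 0 ≤ q x * (capD ℓ ζ₁ x - capD ℓ ζ₂ x) := by
      have := capF_mul_nonneg (capD ℓ ζ₁ x) (capD ℓ ζ₂ x)
      simp only [hq]
      rw [mul_assoc]
      exact mul_nonneg hσ.le this
    simp only [hD]
    linarith
  have hae : D =ᵐ[volume.restrict (Ioc (-ℓ) ℓ)] 0 := by
    rw [← intervalIntegral.integral_eq_zero_iff_of_le_of_nonneg_ae hll ?_ hDint]
    · exact key
    · filter_upwards [ae_restrict_mem measurableSet_Ioc] with y hy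
      exact hDnn y ⟨hy.1.le, hy.2⟩
  have hwae : (fun x => w x * w x) =ᵐ[volume.restrict (Ioc (-ℓ) ℓ)] 0 := by
    filter_upwards [hae, ae_restrict_mem measurableSet_Ioc] with y hy1 hy2
    have h2 : 0 ≤ q y * (capD ℓ ζ₁ y - capD ℓ ζ₂ y) := by
      have := capF_mul_nonneg (capD ℓ ζ₁ y) (capD ℓ ζ₂ y)
      simp only [hq]; rw [mul_assoc]
      exact mul_nonneg hσ.le this
    have hDy : D y = 0 := hy1
    simp only [hD] at hDy
    have : g * w y * w y = 0 := by nlinarith [mul_self_nonneg (w y)]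
    simp only [Pi.zero_apply]
    have hgne : g ≠ 0 := hg.ne'
    nlinarith
  have hwz : ∀ x ∈ Icc (-ℓ) ℓ, w x * w x = 0 :=
    eqOn_zero_of_ae_zero hlt (hwc.mul hwc) hwae
  refine ⟨fun x hx => ?_, rfl⟩
  have := mul_self_eq_zero.1 (hwz x hx)
  simpa [hw, sub_eq_zero] using this

end Unique

lemma capF_neg (t : ℝ) : capF (-t) = -capF t := by
  rw [capF, capF, neg_sq]; ring

section Reflect
variable {g σ ℓ γ P : ℝ} {ζ : ℝ → ℝ}

lemma mapsTo_neg_Icc (ℓ : ℝ) : MapsTo (fun x : ℝ => -x) (Icc (-ℓ) ℓ) (Icc (-ℓ) ℓ) := by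
  intro x hx
  simp only [mem_Icc] at *
  constructor <;> linarith [hx.1, hx.2]

lemma IsCapSol.capD_reflect (hσ : 0 < σ) (hℓ : 0 < ℓ) (h : IsCapSol g σ ℓ γ P ζ) :
    ∀ x ∈ Icc (-ℓ) ℓ, capD ℓ (fun y => ζ (-y)) x = -capD ℓ ζ (-x) := by
  intro x hx
  have hu : UniqueDiffOn ℝ (Icc (-ℓ) ℓ) := uniqueDiffOn_Icc (by linarith)
  have hd : DifferentiableOn ℝ ζ (Icc (-ℓ) ℓ) := h.1.differentiableOn (by norm_num)
  have hdw : HasDerivWithinAt ζ (capD ℓ ζ (-x)) (Icc (-ℓ) ℓ) (-x) :=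
    (hd _ (mapsTo_neg_Icc ℓ hx)).hasDerivWithinAt
  have hinner : HasDerivWithinAt (fun y : ℝ => -y) (-1) (Icc (-ℓ) ℓ) x :=
    (hasDerivAt_neg x).hasDerivWithinAt
  have hcomp := hdw.comp (h := fun y : ℝ => -y) (hh := hinner) (hst := mapsTo_neg_Icc ℓ)
  have : capD ℓ (fun y => ζ (-y)) x = capD ℓ ζ (-x) * -1 :=
    hcomp.derivWithin (hu x hx)
  rw [this]; ring

lemma IsCapSol.reflect (hσ : 0 < σ) (hℓ : 0 < ℓ) (h : IsCapSol g σ ℓ γ P ζ) :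
    IsCapSol g σ ℓ γ P (fun y => ζ (-y)) := by
  have hu : UniqueDiffOn ℝ (Icc (-ℓ) ℓ) := uniqueDiffOn_Icc (by linarith)
  have hcdR : ∀ x ∈ Icc (-ℓ) ℓ, capD ℓ (fun y => ζ (-y)) x = -capD ℓ ζ (-x) :=
    h.capD_reflect hσ hℓ
  refine ⟨?_, ?_, ?_, ?_⟩
  · exact h.1.comp (contDiff_neg.contDiffOn) (mapsTo_neg_Icc ℓ)
  · intro x hx
    have hxm : -x ∈ Ioo (-ℓ) ℓ := ⟨by linarith [hx.2], by linarith [hx.1]⟩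
    have hmc : meanCurv ℓ (fun y => ζ (-y)) x = (g * ζ (-x) - P) / σ := by
      rw [meanCurv_eq]
      have e1 : derivWithin (fun y => capF (capD ℓ (fun z => ζ (-z)) y)) (Icc (-ℓ) ℓ) x =
          derivWithin (fun y => -capF (capD ℓ ζ (-y))) (Icc (-ℓ) ℓ) x := by
        apply derivWithin_congr
        · intro y hy
          show capF (capD ℓ (fun z => ζ (-z)) y) = -capF (capD ℓ ζ (-y))
          rw [hcdR y hy, capF_neg]
        · show capF (capD ℓ (fun z => ζ (-z)) x) = -capF (capD ℓ ζ (-x))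
          rw [hcdR x (Ioo_subset_Icc_self hx), capF_neg]
      rw [e1]
      have hv := h.hasDerivAt_v hσ hℓ (-x) hxm
      have hcomp : HasDerivAt (fun y => capF (capD ℓ ζ (-y)))
          ((g * ζ (-x) - P) / σ * -1) x := hv.comp x (hasDerivAt_neg x)
      have hneg : HasDerivAt (fun y => -capF (capD ℓ ζ (-y)))
          ((g * ζ (-x) - P) / σ) x := by
        have := hcomp.neg
        exact this.congr_deriv (by ring)
      exact hneg.hasDerivWithinAt.derivWithin (hu x (Ioo_subset_Icc_self hx))
    rw [hmc]
    field_simp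
    ring
  · have hl : ℓ ∈ Icc (-ℓ) ℓ := ⟨by linarith, le_rfl⟩
    rw [hcdR ℓ hl, neg_sq, mul_neg, neg_div, h.2.2.2, neg_neg]
  · have hl : -ℓ ∈ Icc (-ℓ) ℓ := ⟨le_rfl, by linarith⟩
    rw [hcdR (-ℓ) hl, neg_neg, neg_sq, mul_neg, neg_div, h.2.2.1]
end Reflect

section Smooth
variable {g σ ℓ γ P : ℝ} {ζ : ℝ → ℝ}

lemma IsCapSol.smooth (hσ : 0 < σ) (hℓ : 0 < ℓ) (h : IsCapSol g σ ℓ γ P ζ) :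
    ContDiffOn ℝ ((⊤ : ℕ∞) : WithTop ℕ∞) ζ (Icc (-ℓ) ℓ) := by
  have hlt : (-ℓ : ℝ) < ℓ := by linarith
  have hu : UniqueDiffOn ℝ (Icc (-ℓ) ℓ) := uniqueDiffOn_Icc hlt
  have key : ∀ n : ℕ, ContDiffOn ℝ (n + 2 : ℕ) ζ (Icc (-ℓ) ℓ) := by
    intro n
    induction n with
    | zero => exact_mod_cast h.1
    | succ n IH =>
      have hucd : ContDiffOn ℝ (n + 1 : ℕ) (capD ℓ ζ) (Icc (-ℓ) ℓ) :=
        capD_contDiffOn hℓ (n := n + 1) (by exact_mod_cast IH)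
      have hvcd : ContDiffOn ℝ (n + 1 : ℕ) (fun x => capF (capD ℓ ζ x)) (Icc (-ℓ) ℓ) :=
        contDiff_capF.comp_contDiffOn hucd
      have hvd : DifferentiableOn ℝ (fun x => capF (capD ℓ ζ x)) (Icc (-ℓ) ℓ) := by
        apply hvcd.differentiableOn
        simp
      have hdvc : ContinuousOn
          (derivWithin (fun x => capF (capD ℓ ζ x)) (Icc (-ℓ) ℓ)) (Icc (-ℓ) ℓ) := by
        have := (contDiffOn_succ_iff_derivWithin (n := n) hu).1 (by exact_mod_cast hvcd)
        exact this.2.2.continuousOn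
      have hrhsc : ContinuousOn (fun x => (g * ζ x - P) / σ) (Icc (-ℓ) ℓ) :=
        ((continuousOn_const.mul h.1.continuousOn).sub continuousOn_const).div_const σ
      have hdv_eq : EqOn (derivWithin (fun x => capF (capD ℓ ζ x)) (Icc (-ℓ) ℓ))
          (fun x => (g * ζ x - P) / σ) (Icc (-ℓ) ℓ) := by
        apply eqOn_Icc_of_eqOn_Ioo hlt hdvc hrhsc
        intro x hx
        exact ((h.hasDerivAt_v hσ hℓ x hx).hasDerivWithinAt).derivWithin
          (hu x (Ioo_subset_Icc_self hx))
      have hdvcd : ContDiffOn ℝ (n + 1 : ℕ)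
          (derivWithin (fun x => capF (capD ℓ ζ x)) (Icc (-ℓ) ℓ)) (Icc (-ℓ) ℓ) := by
        apply ContDiffOn.congr _ hdv_eq
        apply ContDiffOn.div_const _ σ
        apply ContDiffOn.sub _ contDiffOn_const
        apply ContDiffOn.mul contDiffOn_const
        exact IH.of_le (by exact_mod_cast Nat.le_succ (n + 1))
      have hvcd2 : ContDiffOn ℝ ((n + 1) + 1 : ℕ)
          (fun x => capF (capD ℓ ζ x)) (Icc (-ℓ) ℓ) :=
        contDiffOn_of_derivWithin hℓ hvd hdvcd
      have hu_eq : EqOn (capD ℓ ζ)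
          (fun x => capG (capF (capD ℓ ζ x))) (Icc (-ℓ) ℓ) := by
        intro x _
        exact (capG_capF _).symm
      have hucd2 : ContDiffOn ℝ (n + 2 : ℕ) (capD ℓ ζ) (Icc (-ℓ) ℓ) := by
        apply ContDiffOn.congr _ hu_eq
        apply contDiffOn_capG.comp (by exact_mod_cast hvcd2)
        intro x _
        exact capF_mem_Ioo _
      have : ContDiffOn ℝ ((n + 2) + 1 : ℕ) ζ (Icc (-ℓ) ℓ) :=
        contDiffOn_of_derivWithin hℓ (h.1.differentiableOn (by norm_num)) hucd2
      exact_mod_cast this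
  rw [contDiffOn_infty]
  intro n
  exact (key n).of_le (by exact_mod_cast Nat.le_add_right n 2)
end Smooth

section Translate
variable {g σ ℓ γ P : ℝ} {ζ : ℝ → ℝ}

lemma IsCapSol.translate (hℓ : 0 < ℓ) (h : IsCapSol g σ ℓ γ P ζ) (c : ℝ) :
    IsCapSol g σ ℓ γ (P + g * c) (fun x => ζ x + c) := by
  have hlt : (-ℓ : ℝ) < ℓ := by linarith
  have hu : UniqueDiffOn ℝ (Icc (-ℓ) ℓ) := uniqueDiffOn_Icc hlt
  have hcapD : ∀ x ∈ Icc (-ℓ) ℓ, capD ℓ (fun y => ζ y + c) x = capD ℓ ζ x :=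
    fun x hx => derivWithin_add_const c
  refine ⟨h.1.add contDiffOn_const, ?_, ?_, ?_⟩
  · intro x hx
    have hmc : meanCurv ℓ (fun y => ζ y + c) x = meanCurv ℓ ζ x := by
      rw [meanCurv_eq, meanCurv_eq]
      apply derivWithin_congr
      · intro y hy
        show capF (capD ℓ (fun z => ζ z + c) y) = capF (capD ℓ ζ y)
        rw [hcapD y hy]
      · show capF (capD ℓ (fun z => ζ z + c) x) = capF (capD ℓ ζ x)
        rw [hcapD x (Ioo_subset_Icc_self hx)]
    rw [hmc]
    have := h.2.1 x hx
    ring_nf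
    ring_nf at this
    linarith
  · rw [hcapD ℓ ⟨by linarith, le_rfl⟩]; exact h.2.2.1
  · rw [hcapD (-ℓ) ⟨le_rfl, by linarith⟩]; exact h.2.2.2
end Translate

/-- Given the zero-pressure solution `χ`, for every
`Mtop > Mmin = ∫ (χ - min χ)` there is a unique pair `(ζ₀, P₀)` solving the
equilibrium capillary problem with total mass `Mtop`; moreover `ζ₀` is smooth,
even, strictly positive, and `P₀ = (g Mtop - 2γ)/(2ℓ)`. -/
theorem stmt4 (g σ ℓ γ : ℝ) (hg : 0 < g) (hσ : 0 < σ) (hℓ : 0 < ℓ) (hγ : |γ| < σ)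
    (χ : ℝ → ℝ) (hχ : IsCapSol g σ ℓ γ 0 χ) :
    let m : ℝ := sInf (χ '' Set.Icc (-ℓ) ℓ)
    let Mmin : ℝ := ∫ x in (-ℓ)..ℓ, (χ x - m)
    0 ≤ Mmin ∧
    ∀ Mtop : ℝ, Mmin < Mtop →
      ∃ ζ₀ : ℝ → ℝ, ∃ P₀ : ℝ,
        IsCapSol g σ ℓ γ P₀ ζ₀ ∧
        (∫ x in (-ℓ)..ℓ, ζ₀ x) = Mtop ∧
        (∀ ζ : ℝ → ℝ, ∀ P : ℝ, IsCapSol g σ ℓ γ P ζ →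
          (∫ x in (-ℓ)..ℓ, ζ x) = Mtop →
          Set.EqOn ζ ζ₀ (Set.Icc (-ℓ) ℓ) ∧ P = P₀) ∧
        ContDiffOn ℝ ((⊤ : ℕ∞) : WithTop ℕ∞) ζ₀ (Set.Icc (-ℓ) ℓ) ∧
        (∀ x ∈ Set.Icc (-ℓ) ℓ, ζ₀ (-x) = ζ₀ x) ∧
        (∀ x ∈ Set.Icc (-ℓ) ℓ, 0 < ζ₀ x) ∧
        P₀ = (g * Mtop - 2 * γ) / (2 * ℓ) := by
  intro m Mmin
  have hlt : (-ℓ : ℝ) < ℓ := by linarith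
  have hll : (-ℓ : ℝ) ≤ ℓ := hlt.le
  have hχc : ContinuousOn χ (Icc (-ℓ) ℓ) := hχ.1.continuousOn
  have hχint : IntervalIntegrable χ volume (-ℓ) ℓ := by
    apply ContinuousOn.intervalIntegrable; rwa [uIcc_of_le hll]
  set I : ℝ := ∫ x in (-ℓ)..ℓ, χ x with hI
  have hbdd : BddBelow (χ '' Icc (-ℓ) ℓ) :=
    (isCompact_Icc.image_of_continuousOn hχc).bddBelow
  have hm_le : ∀ x ∈ Icc (-ℓ) ℓ, m ≤ χ x :=
    fun x hx => csInf_le hbdd (mem_image_of_mem χ hx)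
  have hMmin_eq : Mmin = I - m * (2 * ℓ) := by
    show (∫ x in (-ℓ)..ℓ, (χ x - m)) = _
    rw [intervalIntegral.integral_sub hχint intervalIntegrable_const,
      intervalIntegral.integral_const]
    simp; ring
  refine ⟨?_, ?_⟩
  · apply intervalIntegral.integral_nonneg hll
    intro u hu
    have := hm_le u hu; linarith
  intro Mtop hMtop
  set c : ℝ := (Mtop - I) / (2 * ℓ) with hc
  set ζ₀ : ℝ → ℝ := fun x => χ x + c with hζ₀
  have hsol : IsCapSol g σ ℓ γ (g * c) ζ₀ := by
    have := hχ.translate hℓ c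
    rwa [zero_add] at this
  have hmass : (∫ x in (-ℓ)..ℓ, ζ₀ x) = Mtop := by
    rw [hζ₀]
    rw [intervalIntegral.integral_add hχint intervalIntegrable_const,
      intervalIntegral.integral_const]
    rw [← hI, smul_eq_mul, hc]
    field_simp
    ring
  refine ⟨ζ₀, g * c, hsol, hmass, ?_, hsol.smooth hσ hℓ, ?_, ?_, ?_⟩
  · intro ζ P hζP hPmass
    exact IsCapSol.unique hg hσ hℓ hζP hsol (hPmass.trans hmass.symm)
  · have hrefl := hχ.reflect hσ hℓ
    have hmassr : (∫ x in (-ℓ)..ℓ, χ (-x)) = ∫ x in (-ℓ)..ℓ, χ x := by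
      rw [intervalIntegral.integral_comp_neg]
      simp
    have heven := (IsCapSol.unique hg hσ hℓ hrefl hχ hmassr).1
    intro x hx
    have h3 : χ (-x) = χ x := heven hx
    show χ (-x) + c = χ x + c
    rw [h3]
  · intro x hx
    have h1 : m ≤ χ x := hm_le x hx
    have h2 : -m < c := by
      rw [hc, hMmin_eq] at *
      rw [lt_div_iff₀ (by linarith : (0:ℝ) < 2 * ℓ)]
      linarith
    show 0 < χ x + c
    linarith
  · exact hsol.pressure_eq hσ hℓ hmass
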